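/- Let S be a finite set of integers of cardinality k and Freiman dimension r = r_ℚ(S) (equivalently, the dimension of S in the sense of Freiman: the largest d such that S is Freiman 2-isomorphic to a subset of ℚ^d not contained in a proper affine subspace). Then |S +̂ S| ≥ r(k − (r+1)/2). -/

import Mathlib

/-- The `F`-vector space of Freiman 2-homomorphisms from `A` to `F`. -/
def freimanHoms (F : Type*) [Field F] {G : Type*} [AddCommGroup G] (A : Set G) :
    Submodule F (A → F) where
  carrier := {φ | ∀ a b c d : A, (a : G) + b = (c : G) + d → φ a + φ b = φ c + φ d}
  add_mem' := by
    intro f g hf hg a b c d h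
    have h1 := hf a b c d h
    have h2 := hg a b c d h
    simp only [Pi.add_apply]
    linear_combination h1 + h2
  zero_mem' := by intro a b c d h; simp
  smul_mem' := by
    intro c f hf a b c' d h
    have h1 := hf a b c' d h
    simp only [Pi.smul_apply, smul_eq_mul]
    linear_combination c * h1

/-- The Freiman dimension `r_F(A) = dim Hom₂(A, F) − 1`. -/
noncomputable def freimanDim (F : Type*) [Field F] {G : Type*} [AddCommGroup G]
    (A : Set G) : ℕ :=
  Module.finrank F (freimanHoms F A) - 1

/-- A Freiman 2-homomorphism from `A` (as a subtype) to an abelian group `H`. -/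
def IsFreiman2HomOn {G H : Type*} [AddCommGroup G] [AddCommGroup H] (A : Set G)
    (φ : A → H) : Prop :=
  ∀ a b c d : A, (a : G) + b = (c : G) + d → φ a + φ b = φ c + φ d

/-- The restricted sumset `X +̂ X = {x + y : x, y ∈ X, x ≠ y}`. -/
def hatAdd {G : Type*} [AddCommGroup G] [DecidableEq G] (X : Finset G) : Finset G :=
  ((X ×ˢ X).filter fun p => p.1 ≠ p.2).image fun p => p.1 + p.2



open Module Finset

section Support

variable {W : Type*} [AddCommGroup W] [Module ℚ W]

lemma exists_functional_ne_zero (D : Finset W) (hD : ∀ u ∈ D, u ≠ (0:W)) :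
    ∃ g : W →ₗ[ℚ] ℚ, ∀ u ∈ D, g u ≠ 0 := by
  classical
  induction D using Finset.induction_on with
  | empty => exact ⟨0, by simp⟩
  | @insert w D hwD ih =>
    obtain ⟨g, hg⟩ := ih (fun u hu => hD u (Finset.mem_insert_of_mem hu))
    have hw0 : w ≠ 0 := hD w (Finset.mem_insert_self w D)
    have hex : ¬ (∀ φ : Module.Dual ℚ W, φ w = 0) := by
      rw [Module.forall_dual_apply_eq_zero_iff]; exact hw0
    push_neg at hex
    obtain ⟨g', hg'⟩ := hex
    set bad : Finset ℚ := ((insert w D).filter (fun u => g' u ≠ 0)).image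
        (fun u => -(g u) / (g' u)) with hbad
    obtain ⟨c, -, hc⟩ := (Set.infinite_univ (α := ℚ)).exists_notMem_finset bad
    refine ⟨g + c • g', ?_⟩
    intro u hu
    simp only [LinearMap.add_apply, LinearMap.smul_apply, smul_eq_mul]
    by_cases h0 : g' u = 0
    · have hu' : u ∈ D := by
        rcases Finset.mem_insert.1 hu with rfl | h
        · exact absurd h0 hg'
        · exact h
      simpa [h0] using hg u hu'
    · intro hzero
      apply hc
      refine Finset.mem_image.2 ⟨u, Finset.mem_filter.2 ⟨hu, h0⟩, ?_⟩
      field_simp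
      linarith [hzero]

lemma exists_injOn_functional (A : Finset W) :
    ∃ g : W →ₗ[ℚ] ℚ, Set.InjOn g (A : Set W) := by
  classical
  have hside : ∀ u ∈ ((A ×ˢ A).filter (fun p => p.1 ≠ p.2)).image (fun p => p.1 - p.2),
      u ≠ (0:W) := by
    rintro u hu
    simp only [Finset.mem_image, Finset.mem_filter] at hu
    obtain ⟨p, ⟨-, hne⟩, rfl⟩ := hu
    exact sub_ne_zero.2 hne
  obtain ⟨g, hg⟩ := exists_functional_ne_zero
      (((A ×ˢ A).filter (fun p => p.1 ≠ p.2)).image (fun p => p.1 - p.2)) hside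
  refine ⟨g, fun x hx y hy hxy => ?_⟩
  by_contra hne
  have hmem : x - y ∈ ((A ×ˢ A).filter (fun p => p.1 ≠ p.2)).image (fun p => p.1 - p.2) :=
    Finset.mem_image.2 ⟨(x, y), Finset.mem_filter.2
      ⟨Finset.mem_product.2 ⟨Finset.mem_coe.1 hx, Finset.mem_coe.1 hy⟩, hne⟩, rfl⟩
  exact hg _ hmem (by rw [map_sub, hxy, sub_self])

lemma exists_functional_vanishing (U : Submodule ℚ W) (p : W) (hp : p ∉ U) :
    ∃ h : W →ₗ[ℚ] ℚ, (∀ u ∈ U, h u = 0) ∧ h p = 1 := by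
  have hq : U.mkQ p ≠ 0 := by
    simpa [Submodule.mkQ_apply, Submodule.Quotient.mk_eq_zero] using hp
  have hex : ¬ (∀ φ : Module.Dual ℚ (W ⧸ U), φ (U.mkQ p) = 0) := by
    rw [Module.forall_dual_apply_eq_zero_iff]; exact hq
  push_neg at hex
  obtain ⟨φ, hφ⟩ := hex
  refine ⟨(φ (U.mkQ p))⁻¹ • (φ.comp U.mkQ), fun u hu => ?_, ?_⟩
  · have h0 : U.mkQ u = 0 := (Submodule.Quotient.mk_eq_zero U).2 hu
    simp [LinearMap.smul_apply, h0]
  · simp only [LinearMap.smul_apply, LinearMap.comp_apply, smul_eq_mul]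
    exact inv_mul_cancel₀ hφ

lemma mem_affineSpan_iff_sub_mem {s : Set W} {b₀ : W} (hb₀ : b₀ ∈ s) (v : W) :
    v ∈ affineSpan ℚ s ↔ v - b₀ ∈ vectorSpan ℚ s := by
  constructor
  · intro hv
    have h1 := AffineSubspace.vsub_mem_direction hv (mem_affineSpan ℚ hb₀)
    rwa [direction_affineSpan, vsub_eq_sub] at h1
  · intro hv
    have h1 := AffineSubspace.vadd_mem_iff_mem_direction (s := affineSpan ℚ s) (v - b₀)
      (mem_affineSpan ℚ hb₀)
    rw [direction_affineSpan] at h1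
    have h2 := h1.2 hv
    simpa [vadd_eq_add, sub_add_cancel] using h2

lemma finrank_vectorSpan_add_one_le (B : Finset W) (hB : B.Nonempty) :
    finrank ℚ (vectorSpan ℚ (B : Set W)) + 1 ≤ B.card := by
  have h1 : 1 ≤ B.card := hB.card_pos
  have hcard : Fintype.card ↥B = (B.card - 1) + 1 := by
    rw [Fintype.card_coe]; omega
  have h := finrank_vectorSpan_range_le ℚ (fun x : ↥B => (x : W)) hcard
  have hr : Set.range (fun x : ↥B => (x : W)) = (B : Set W) := by
    rw [Subtype.range_coe_subtype]; ext x; simp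
  rw [hr] at h
  omega

end Support

section Rotation

variable {W : Type*} [AddCommGroup W] [Module ℚ W] [FiniteDimensional ℚ W]

/-- Key geometric lemma: there is a functional `g` supporting at `v` (i.e. `g < g v` on `A'`)
whose set of maximizers on `A'` has vector span of rank at least `r - 1`. -/
lemma exists_supporting_functional (A' : Finset W) (hA' : A'.Nonempty) (v : W) (r : ℕ)
    (hdim : r ≤ finrank ℚ (vectorSpan ℚ (insert v (A' : Set W))))
    (g₀ : W →ₗ[ℚ] ℚ) (hg₀ : ∀ a ∈ A', g₀ a < g₀ v) :
    ∃ g : W →ₗ[ℚ] ℚ, (∀ a ∈ A', g a < g v) ∧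
      r - 1 ≤ finrank ℚ (vectorSpan ℚ
        ((A'.filter (fun a => ∀ a' ∈ A', g a' ≤ g a)) : Set W)) := by
  classical
  set Vals : Set ℕ := {n | ∃ g : W →ₗ[ℚ] ℚ, (∀ a ∈ A', g a < g v) ∧
    n = finrank ℚ (vectorSpan ℚ ((A'.filter (fun a => ∀ a' ∈ A', g a' ≤ g a)) : Set W))}
    with hVals
  have hne : Vals.Nonempty := ⟨_, g₀, hg₀, rfl⟩
  have hbdd : BddAbove Vals := by
    refine ⟨finrank ℚ W, ?_⟩
    rintro n ⟨g, -, rfl⟩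
    exact (vectorSpan ℚ _).finrank_le
  obtain ⟨g, hgK, hgs⟩ := Nat.sSup_mem hne hbdd
  set s := sSup Vals with hs
  set B := A'.filter (fun a => ∀ a' ∈ A', g a' ≤ g a) with hB
  by_cases hdone : r - 1 ≤ finrank ℚ (vectorSpan ℚ (B : Set W))
  · exact ⟨g, hgK, hdone⟩
  exfalso
  -- so s = finrank vectorSpan B ≤ r - 2
  obtain ⟨b₀, hb₀A, hb₀max⟩ := A'.exists_max_image g hA'
  have hb₀B : b₀ ∈ B := Finset.mem_filter.2 ⟨hb₀A, hb₀max⟩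
  set M := g b₀ with hM
  have hBval : ∀ b ∈ B, g b = M := fun b hb =>
    le_antisymm (hb₀max b ((Finset.mem_filter.1 hb).1)) ((Finset.mem_filter.1 hb).2 b₀ hb₀A)
  have hBle : ∀ a ∈ A', g a ≤ M := hb₀max
  have hBmem : ∀ a ∈ A', g a = M → a ∈ B := by
    intro a ha hMa
    exact Finset.mem_filter.2 ⟨ha, fun a' ha' => hMa ▸ hb₀max a' ha'⟩
  set U := vectorSpan ℚ (insert v (B : Set W)) with hU
  -- find p ∈ A' outside the affine span of insert v B
  have hexp : ∃ p ∈ A', p ∉ affineSpan ℚ (insert v (B : Set W)) := by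
    by_contra hcon
    push_neg at hcon
    have hsub : insert v (A' : Set W) ⊆ ↑(affineSpan ℚ (insert v (B : Set W))) := by
      intro x hx
      rcases hx with rfl | hx
      · exact mem_affineSpan ℚ (Set.mem_insert _ _)
      · exact hcon x (Finset.mem_coe.1 hx)
    have hle : vectorSpan ℚ (insert v (A' : Set W)) ≤ U := by
      have h1 := AffineSubspace.direction_le ((affineSpan_le).2 hsub)
      rwa [direction_affineSpan, direction_affineSpan] at h1
    have h2 : finrank ℚ U ≤ finrank ℚ (vectorSpan ℚ (B : Set W)) + 1 :=
      finrank_vectorSpan_insert_le_set ℚ (B : Set W) v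
    have h3 := Submodule.finrank_mono hle
    omega
  obtain ⟨p, hpA, hp⟩ := hexp
  have hb₀ins : b₀ ∈ insert v (B : Set W) := Set.mem_insert_of_mem _ (Finset.mem_coe.2 hb₀B)
  have hpU : p - b₀ ∉ U := fun hmem => hp ((mem_affineSpan_iff_sub_mem hb₀ins p).2 hmem)
  obtain ⟨h, hvan, hone⟩ := exists_functional_vanishing U (p - b₀) hpU
  -- H x := h x - h b₀ vanishes on insert v B, is 1 at p
  have hHins : ∀ x ∈ insert v (B : Set W), h x = h b₀ := by
    intro x hx
    have : x - b₀ ∈ U := by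
      have := vsub_mem_vectorSpan ℚ hx hb₀ins
      rwa [vsub_eq_sub] at this
    have h0 := hvan _ this
    rw [map_sub] at h0
    linarith
  have hHp : h p - h b₀ = 1 := by rw [← map_sub]; exact hone
  set P' := A'.filter (fun a => 0 < h a - h b₀) with hP'
  have hpP' : p ∈ P' := Finset.mem_filter.2 ⟨hpA, by rw [hHp]; norm_num⟩
  have hPnotB : ∀ a ∈ P', a ∉ B := by
    intro a ha haB
    have h1 := (Finset.mem_filter.1 ha).2
    have h2 := hHins a (Set.mem_insert_of_mem _ (Finset.mem_coe.2 haB))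
    rw [h2] at h1; linarith
  have hPlt : ∀ a ∈ P', g a < M := by
    intro a ha
    rcases lt_or_eq_of_le (hBle a (Finset.mem_filter.1 ha).1) with h1 | h1
    · exact h1
    · exact absurd (hBmem a (Finset.mem_filter.1 ha).1 h1) (hPnotB a ha)
  obtain ⟨astar, hastarP, hastarmin⟩ := P'.exists_min_image
    (fun a => (M - g a) / (h a - h b₀)) ⟨p, hpP'⟩
  have hastarA : astar ∈ A' := (Finset.mem_filter.1 hastarP).1
  have hHastar : 0 < h astar - h b₀ := (Finset.mem_filter.1 hastarP).2
  set t := (M - g astar) / (h astar - h b₀) with ht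
  have htpos : 0 < t := div_pos (by linarith [hPlt astar hastarP]) hHastar
  -- key bound
  have hbound : ∀ a ∈ A', g a + t * (h a - h b₀) ≤ M := by
    intro a ha
    by_cases hHa : 0 < h a - h b₀
    · have haP : a ∈ P' := Finset.mem_filter.2 ⟨ha, hHa⟩
      have h1 : t ≤ (M - g a) / (h a - h b₀) := hastarmin a haP
      have h2 : t * (h a - h b₀) ≤ M - g a := by
        rw [← le_div_iff₀ hHa]; exact h1
      linarith
    · push_neg at hHa
      have h1 : t * (h a - h b₀) ≤ 0 := mul_nonpos_of_nonneg_of_nonpos (le_of_lt htpos) hHa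
      have := hBle a ha
      linarith
  have hastareq : g astar + t * (h astar - h b₀) = M := by
    rw [ht, div_mul_cancel₀]
    · ring
    · exact ne_of_gt hHastar
  set g₂ : W →ₗ[ℚ] ℚ := g + t • h with hg₂
  have hg₂app : ∀ x, g₂ x = g x + t * h x := fun x => rfl
  set B₂ := A'.filter (fun a => ∀ a' ∈ A', g₂ a' ≤ g₂ a) with hB₂
  have hg₂le : ∀ a ∈ A', g₂ a ≤ M + t * h b₀ := by
    intro a ha
    have := hbound a ha
    rw [hg₂app]; linarith
  have hmemB₂ : ∀ y ∈ A', g y + t * (h y - h b₀) = M → y ∈ B₂ := by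
    intro y hy hyeq
    refine Finset.mem_filter.2 ⟨hy, fun a' ha' => ?_⟩
    have h1 := hg₂le a' ha'
    rw [hg₂app]
    rw [hg₂app] at h1 ⊢
    linarith
  have hBB₂ : ∀ b ∈ B, b ∈ B₂ := by
    intro b hb
    refine hmemB₂ b (Finset.mem_filter.1 hb).1 ?_
    have h1 := hBval b hb
    have h2 := hHins b (Set.mem_insert_of_mem _ (Finset.mem_coe.2 hb))
    rw [h1, h2]; ring
  have hastarB₂ : astar ∈ B₂ := hmemB₂ astar hastarA hastareq
  -- g₂ is supporting at v
  have hK₂ : ∀ a ∈ A', g₂ a < g₂ v := by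
    intro a ha
    have h1 := hg₂le a ha
    have h2 : h v = h b₀ := hHins v (Set.mem_insert _ _)
    have h3 : M < g v := hgK b₀ hb₀A
    rw [hg₂app a, hg₂app v, h2]
    rw [hg₂app a] at h1
    linarith
  -- rank of B₂ is at least s + 1
  have hsubB₂ : vectorSpan ℚ (insert astar (B : Set W)) ≤ vectorSpan ℚ (B₂ : Set W) := by
    apply vectorSpan_mono
    intro x hx
    rcases hx with rfl | hx
    · exact Finset.mem_coe.2 hastarB₂
    · exact Finset.mem_coe.2 (hBB₂ x (Finset.mem_coe.1 hx))
  have hlt : vectorSpan ℚ (B : Set W) < vectorSpan ℚ (insert astar (B : Set W)) := by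
    refine lt_of_le_of_ne (vectorSpan_mono ℚ (Set.subset_insert _ _)) ?_
    intro heq
    have h1 : astar - b₀ ∈ vectorSpan ℚ (insert astar (B : Set W)) := by
      have := vsub_mem_vectorSpan ℚ (Set.mem_insert astar _)
        (Set.mem_insert_of_mem _ (Finset.mem_coe.2 hb₀B))
      rwa [vsub_eq_sub] at this
    rw [← heq] at h1
    have h2 : astar - b₀ ∈ U :=
      vectorSpan_mono ℚ (Set.subset_insert _ _) h1
    have h3 := hvan _ h2
    rw [map_sub] at h3
    linarith
  have hrank2 : s + 1 ≤ finrank ℚ (vectorSpan ℚ (B₂ : Set W)) := by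
    have h1 := Submodule.finrank_lt_finrank_of_lt hlt
    have h2 := Submodule.finrank_mono hsubB₂
    rw [hgs] at hs
    omega
  have hmemVals : finrank ℚ (vectorSpan ℚ (B₂ : Set W)) ∈ Vals := ⟨g₂, hK₂, rfl⟩
  have := le_csSup hbdd hmemVals
  omega

end Rotation

section HatAdd

variable {W : Type*} [AddCommGroup W] [DecidableEq W]

lemma mem_hatAdd {X : Finset W} {z : W} :
    z ∈ hatAdd X ↔ ∃ a ∈ X, ∃ b ∈ X, a ≠ b ∧ a + b = z := by
  simp only [hatAdd, Finset.mem_image, Finset.mem_filter, Finset.mem_product, Prod.exists]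
  constructor
  · rintro ⟨a, b, ⟨⟨ha, hb⟩, hne⟩, rfl⟩
    exact ⟨a, ha, b, hb, hne, rfl⟩
  · rintro ⟨a, ha, b, hb, hne, rfl⟩
    exact ⟨a, b, ⟨⟨ha, hb⟩, hne⟩, rfl⟩

lemma hatAdd_mono {X Y : Finset W} (h : X ⊆ Y) : hatAdd X ⊆ hatAdd Y := by
  intro z hz
  rw [mem_hatAdd] at hz ⊢
  obtain ⟨a, ha, b, hb, hne, rfl⟩ := hz
  exact ⟨a, h ha, b, h hb, hne, rfl⟩

end HatAdd

section Geom

variable {W : Type*} [AddCommGroup W] [Module ℚ W] [FiniteDimensional ℚ W] [DecidableEq W]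

theorem freiman_geom (A : Finset W) : ∀ r : ℕ,
    r ≤ finrank ℚ (vectorSpan ℚ (A : Set W)) →
    (r : ℝ) * ((A.card : ℝ) - ((r : ℝ) + 1) / 2) ≤ ((hatAdd A).card : ℝ) := by
  induction A using Finset.strongInduction with
  | _ A ih =>
  intro r hr
  rcases Nat.eq_zero_or_pos r with rfl | hr1
  · simpa using (hatAdd A).card.cast_nonneg
  -- A has at least 2 elements
  have hk2 : 2 ≤ A.card := by
    by_contra hcon
    push_neg at hcon
    obtain ⟨x, hx⟩ := (Finset.card_le_one_iff_subset_singleton (s := A)).1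
      (show A.card ≤ 1 by omega)
    have h1 : vectorSpan ℚ (A : Set W) ≤ vectorSpan ℚ ({x} : Set W) := by
      apply vectorSpan_mono
      intro y hy
      have := hx (Finset.mem_coe.1 hy)
      simpa using this
    rw [vectorSpan_singleton] at h1
    have h2 : finrank ℚ (vectorSpan ℚ (A : Set W)) = 0 := by
      have := Submodule.finrank_mono h1
      simpa [finrank_bot] using this
    omega
  obtain ⟨g₀, hg₀inj⟩ := exists_injOn_functional A
  have hAne : A.Nonempty := Finset.card_pos.1 (by omega)
  obtain ⟨v, hvA, hvmax⟩ := A.exists_max_image g₀ hAne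
  have hvstrict : ∀ a ∈ A, a ≠ v → g₀ a < g₀ v := by
    intro a ha hne
    refine lt_of_le_of_ne (hvmax a ha) (fun hh => hne ?_)
    exact hg₀inj (Finset.mem_coe.2 ha) (Finset.mem_coe.2 hvA) hh
  set A' := A.erase v with hA'
  have hA'card : A'.card = A.card - 1 := Finset.card_erase_of_mem hvA
  have hA'ne : A'.Nonempty := Finset.card_pos.1 (by omega)
  have hAins : insert v (A' : Set W) = (A : Set W) := by
    rw [hA', Finset.coe_erase, Set.insert_diff_singleton, Set.insert_eq_self]
    exact Finset.mem_coe.2 hvA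
  have hsub : A' ⊆ A := Finset.erase_subset v A
  have hssub : A' ⊂ A := Finset.erase_ssubset hvA
  have hhat_sub : hatAdd A' ⊆ hatAdd A := hatAdd_mono hsub
  have hkcast : ((A'.card : ℝ)) = (A.card : ℝ) - 1 := by
    rw [hA'card]
    have : 1 ≤ A.card := by omega
    push_cast [Nat.cast_sub this]
    ring
  by_cases hcase : r ≤ finrank ℚ (vectorSpan ℚ (A' : Set W))
  · -- case a : removing v keeps dimension at least r
    obtain ⟨g, hK, hrank⟩ := exists_supporting_functional A' hA'ne v r
      (by rw [hAins]; exact hr) g₀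
      (fun a ha => hvstrict a (hsub ha) (Finset.ne_of_mem_erase ha))
    set B := A'.filter (fun a => ∀ a' ∈ A', g a' ≤ g a) with hB
    have hBsub : B ⊆ A' := Finset.filter_subset _ _
    have hBne : B.Nonempty := by
      obtain ⟨b, hb, hbm⟩ := A'.exists_max_image g hA'ne
      exact ⟨b, Finset.mem_filter.2 ⟨hb, hbm⟩⟩
    have hBcard : r ≤ B.card := by
      have h1 := finrank_vectorSpan_add_one_le B hBne
      omega
    set New := B.image (fun b => v + b) with hNew
    have hNewcard : New.card = B.card :=
      Finset.card_image_of_injective _ (add_right_injective v)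
    have hNewsub : New ⊆ hatAdd A := by
      intro x hx
      obtain ⟨b, hb, rfl⟩ := Finset.mem_image.1 hx
      rw [mem_hatAdd]
      exact ⟨v, hvA, b, hsub (hBsub hb), (Finset.ne_of_mem_erase (hBsub hb)).symm, rfl⟩
    have hdisj : Disjoint New (hatAdd A') := by
      rw [Finset.disjoint_left]
      intro x hxN hxA'
      obtain ⟨b, hbB, rfl⟩ := Finset.mem_image.1 hxN
      rw [mem_hatAdd] at hxA'
      obtain ⟨a₁, ha₁, a₂, ha₂, hne12, heq⟩ := hxA'
      have h1 : g a₁ ≤ g b := (Finset.mem_filter.1 hbB).2 a₁ ha₁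
      have h2 : g a₂ ≤ g b := (Finset.mem_filter.1 hbB).2 a₂ ha₂
      have h3 : g b < g v := hK b (hBsub hbB)
      have h4 : g a₁ + g a₂ = g v + g b := by
        rw [← map_add, ← map_add, heq]
      linarith
    have hcount : (hatAdd A').card + B.card ≤ (hatAdd A).card := by
      have h1 : (hatAdd A' ∪ New).card = (hatAdd A').card + New.card :=
        Finset.card_union_of_disjoint hdisj.symm
      have h2 : hatAdd A' ∪ New ⊆ hatAdd A := Finset.union_subset hhat_sub hNewsub
      have h3 := Finset.card_le_card h2
      omega
    have hIH := ih A' hssub r hcase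
    rw [hkcast] at hIH
    have hc1 : ((hatAdd A').card : ℝ) + (B.card : ℝ) ≤ ((hatAdd A).card : ℝ) := by
      exact_mod_cast hcount
    have hc2 : (r : ℝ) ≤ (B.card : ℝ) := by exact_mod_cast hBcard
    nlinarith [hIH, hc1, hc2]
  · -- case b : dimension drops, v is outside the affine span of A'
    push_neg at hcase
    have hd'ub : finrank ℚ (vectorSpan ℚ (A : Set W)) ≤
        finrank ℚ (vectorSpan ℚ (A' : Set W)) + 1 := by
      rw [← hAins]
      exact finrank_vectorSpan_insert_le_set ℚ (A' : Set W) v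
    have hd' : finrank ℚ (vectorSpan ℚ (A' : Set W)) = r - 1 := by omega
    have hvnot : v ∉ affineSpan ℚ (A' : Set W) := by
      intro hv
      have hsub2 : (A : Set W) ⊆ ↑(affineSpan ℚ (A' : Set W)) := by
        rw [← hAins]
        exact Set.insert_subset hv (subset_affineSpan ℚ _)
      have h1 := AffineSubspace.direction_le ((affineSpan_le).2 hsub2)
      rw [direction_affineSpan, direction_affineSpan] at h1
      have h2 := Submodule.finrank_mono h1
      omega
    set New := A'.image (fun a => v + a) with hNew
    have hNewcard : New.card = A'.card :=
      Finset.card_image_of_injective _ (add_right_injective v)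
    have hNewsub : New ⊆ hatAdd A := by
      intro x hx
      obtain ⟨a, ha, rfl⟩ := Finset.mem_image.1 hx
      rw [mem_hatAdd]
      exact ⟨v, hvA, a, hsub ha, (Finset.ne_of_mem_erase ha).symm, rfl⟩
    have hdisj : Disjoint New (hatAdd A') := by
      rw [Finset.disjoint_left]
      intro x hxN hxA'
      obtain ⟨a, haA, rfl⟩ := Finset.mem_image.1 hxN
      rw [mem_hatAdd] at hxA'
      obtain ⟨a₁, ha₁, a₂, ha₂, hne12, heq⟩ := hxA'
      apply hvnot
      have hveq : a₂ - a + a₁ = v := by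
        have h5 : a₂ + a₁ = v + a := by rw [add_comm a₂ a₁]; exact heq
        rw [sub_add_eq_add_sub, h5, add_sub_cancel_right]
      have hmem : a₂ - a ∈ (affineSpan ℚ (A' : Set W)).direction := by
        rw [direction_affineSpan]
        have := vsub_mem_vectorSpan ℚ (Finset.mem_coe.2 ha₂) (Finset.mem_coe.2 haA)
        rwa [vsub_eq_sub] at this
      have := AffineSubspace.vadd_mem_of_mem_direction hmem (mem_affineSpan ℚ (Finset.mem_coe.2 ha₁))
      rwa [vadd_eq_add, hveq] at this
    have hcount : (hatAdd A').card + A'.card ≤ (hatAdd A).card := by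
      have h1 : (hatAdd A' ∪ New).card = (hatAdd A').card + New.card :=
        Finset.card_union_of_disjoint hdisj.symm
      have h2 : hatAdd A' ∪ New ⊆ hatAdd A := Finset.union_subset hhat_sub hNewsub
      have h3 := Finset.card_le_card h2
      omega
    have hIH := ih A' hssub (r - 1) (by omega)
    rw [hkcast] at hIH
    have hc1 : ((hatAdd A').card : ℝ) + ((A.card : ℝ) - 1) ≤ ((hatAdd A).card : ℝ) := by
      have : ((hatAdd A').card : ℝ) + (A'.card : ℝ) ≤ ((hatAdd A).card : ℝ) := by
        exact_mod_cast hcount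
      rwa [hkcast] at this
    have hrcast : ((r - 1 : ℕ) : ℝ) = (r : ℝ) - 1 := by
      have : 1 ≤ r := hr1
      push_cast [Nat.cast_sub this]
      ring
    rw [hrcast] at hIH
    nlinarith [hIH, hc1]

end Geom

/-- Freiman's inequality: a finite set `S ⊆ ℤ` of cardinality `k` and Freiman dimension
`r = r_ℚ(S)` satisfies `|S +̂ S| ≥ r(k − (r+1)/2)`. -/
theorem freiman_dimension_inequality (S : Finset ℤ) (k r : ℕ) (hk : S.card = k)
    (hr : r = freimanDim ℚ (S : Set ℤ)) :
    (r : ℝ) * ((k : ℝ) - ((r : ℝ) + 1) / 2) ≤ ((hatAdd S).card : ℝ) := by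
  classical
  subst hk
  rcases Nat.eq_zero_or_pos r with rfl | hr1
  · simpa using (hatAdd S).card.cast_nonneg
  rw [freimanDim] at hr
  set V := freimanHoms ℚ (S : Set ℤ) with hV
  have hfinpi : FiniteDimensional ℚ (↥(S : Set ℤ) → ℚ) := inferInstance
  have hn : finrank ℚ ↥V = r + 1 := by omega
  -- S is nonempty
  have hSne : S.Nonempty := by
    rcases S.eq_empty_or_nonempty with rfl | h
    · exfalso
      have h1 : finrank ℚ ↥V ≤ finrank ℚ (↥(((∅:Finset ℤ)) : Set ℤ) → ℚ) := V.finrank_le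
      have h2 : finrank ℚ (↥(((∅:Finset ℤ)) : Set ℤ) → ℚ) = 0 := by
        have : IsEmpty ↥(((∅:Finset ℤ)) : Set ℤ) := by
          constructor; rintro ⟨x, hx⟩; simp at hx
        exact finrank_zero_of_subsingleton
      omega
    · exact h
  -- the identity embedding is a Freiman hom
  have hφ₀ : (fun x : ↥(S : Set ℤ) => ((x : ℤ) : ℚ)) ∈ V := by
    intro a b c d h
    have := congrArg (fun z : ℤ => (z : ℚ)) h
    push_cast at this
    exact this
  set W := Module.Dual ℚ ↥V with hW
  set ev : ↥(S : Set ℤ) → W := fun s => (LinearMap.proj s).comp V.subtype with hev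
  have hevapp : ∀ (s : ↥(S : Set ℤ)) (φ : ↥V), ev s φ = (φ : ↥(S : Set ℤ) → ℚ) s :=
    fun s φ => rfl
  have hevinj : Function.Injective ev := by
    intro x y hxy
    have h1 := congrArg (fun ψ : W => ψ ⟨_, hφ₀⟩) hxy
    simp only [hevapp] at h1
    have h2 : ((x : ℤ) : ℚ) = ((y : ℤ) : ℚ) := h1
    exact Subtype.ext (by exact_mod_cast h2)
  set A : Finset W := S.attach.image (fun s : {x // x ∈ S} => ev ⟨s.1, Finset.mem_coe.2 s.2⟩) with hA
  have hAcard : A.card = S.card := by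
    rw [hA, Finset.card_image_of_injective _ (fun s s' hss' => ?_), Finset.card_attach]
    have := hevinj hss'
    exact Subtype.ext (congrArg Subtype.val this)
  -- every evaluation lies in A
  have hmemA : ∀ s : ↥(S : Set ℤ), ev s ∈ A := by
    intro s
    rw [hA]
    refine Finset.mem_image.2 ⟨⟨(s : ℤ), Finset.mem_coe.1 s.2⟩, Finset.mem_attach _ _, ?_⟩
    rfl
  -- the span of A is everything
  have hspan : Submodule.span ℚ (A : Set W) = ⊤ := by
    by_contra hne
    obtain ⟨w, hw⟩ : ∃ w : W, w ∉ Submodule.span ℚ (A : Set W) := by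
      by_contra hcon
      push_neg at hcon
      exact hne (Submodule.eq_top_iff'.2 hcon)
    obtain ⟨h, hvan, hone⟩ := exists_functional_vanishing (Submodule.span ℚ (A : Set W)) w hw
    set φ := (Module.evalEquiv ℚ ↥V).symm h with hφ
    have hh : Module.evalEquiv ℚ ↥V φ = h := LinearEquiv.apply_symm_apply _ _
    have hval : ∀ s : ↥(S : Set ℤ), (φ : ↥(S : Set ℤ) → ℚ) s = 0 := by
      intro s
      have h0 : h (ev s) = 0 := hvan _ (Submodule.subset_span (Finset.mem_coe.2 (hmemA s)))
      rw [← hh] at h0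
      exact h0
    have hφ0 : φ = 0 := by
      apply Subtype.ext
      funext s
      exact hval s
    rw [hφ0] at hh
    rw [map_zero] at hh
    rw [← hh] at hone
    simp at hone
  have hWfin : finrank ℚ W = r + 1 := by
    show finrank ℚ (Module.Dual ℚ ↥V) = r + 1
    rw [Subspace.dual_finrank_eq, hn]
  -- vector span of A has rank at least r
  obtain ⟨s₀, hs₀⟩ := hSne
  set x₀ : W := ev ⟨s₀, Finset.mem_coe.2 hs₀⟩ with hx₀
  have hx₀A : x₀ ∈ A := hmemA _
  have hle : Submodule.span ℚ (A : Set W) ≤ vectorSpan ℚ (A : Set W) ⊔ Submodule.span ℚ {x₀} := by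
    rw [Submodule.span_le]
    intro x hx
    have h1 : x - x₀ ∈ vectorSpan ℚ (A : Set W) := by
      have := vsub_mem_vectorSpan ℚ hx (Finset.mem_coe.2 hx₀A)
      rwa [vsub_eq_sub] at this
    have h2 : x₀ ∈ Submodule.span ℚ ({x₀} : Set W) := Submodule.mem_span_singleton_self x₀
    have h3 := Submodule.add_mem_sup h1 h2
    simpa using h3
  have hrank : r ≤ finrank ℚ (vectorSpan ℚ (A : Set W)) := by
    have h1 : finrank ℚ ↥(Submodule.span ℚ ({x₀} : Set W)) ≤ 1 := by
      rcases eq_or_ne x₀ 0 with h | h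
      · rw [h, Submodule.span_zero_singleton]
        simp
      · rw [finrank_span_singleton h]
    have h2 : finrank ℚ ↥(vectorSpan ℚ (A : Set W) ⊔ Submodule.span ℚ ({x₀} : Set W)) ≤
        finrank ℚ (vectorSpan ℚ (A : Set W)) + finrank ℚ ↥(Submodule.span ℚ ({x₀} : Set W)) := by
      have := Submodule.finrank_sup_add_finrank_inf_eq (vectorSpan ℚ (A : Set W))
        (Submodule.span ℚ ({x₀} : Set W))
      omega
    have h3 : finrank ℚ ↥(Submodule.span ℚ (A : Set W)) = r + 1 := by
      rw [hspan, finrank_top, hWfin]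
    have h4 := Submodule.finrank_mono hle
    omega
  -- transfer the restricted sumset
  set g : ℤ → W := fun x =>
    if hex : ∃ p : ↥(S : Set ℤ) × ↥(S : Set ℤ), p.1 ≠ p.2 ∧ ((p.1 : ℤ) + (p.2 : ℤ)) = x then
      ev hex.choose.1 + ev hex.choose.2
    else 0 with hg
  have htrans : hatAdd A ⊆ (hatAdd S).image g := by
    intro z hz
    rw [mem_hatAdd] at hz
    obtain ⟨x, hx, y, hy, hxy, rfl⟩ := hz
    rw [hA] at hx hy
    obtain ⟨s₁, -, rfl⟩ := Finset.mem_image.1 hx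
    obtain ⟨s₂, -, rfl⟩ := Finset.mem_image.1 hy
    set q₁ : ↥(S : Set ℤ) := ⟨(s₁ : ℤ), Finset.mem_coe.2 s₁.2⟩
    set q₂ : ↥(S : Set ℤ) := ⟨(s₂ : ℤ), Finset.mem_coe.2 s₂.2⟩
    have hq : q₁ ≠ q₂ := fun hqq => hxy (by rw [hqq])
    have hexx : ∃ p : ↥(S : Set ℤ) × ↥(S : Set ℤ), p.1 ≠ p.2 ∧
        ((p.1 : ℤ) + (p.2 : ℤ)) = ((q₁ : ℤ) + (q₂ : ℤ)) := ⟨(q₁, q₂), hq, rfl⟩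
    refine Finset.mem_image.2 ⟨(q₁ : ℤ) + (q₂ : ℤ), ?_, ?_⟩
    · rw [mem_hatAdd (W := ℤ)]
      exact ⟨q₁, Finset.mem_coe.1 q₁.2, q₂, Finset.mem_coe.1 q₂.2, fun hc => hq (Subtype.ext hc), rfl⟩
    · rw [hg]
      simp only [hexx, dif_pos]
      have hsum := hexx.choose_spec.2
      -- ev choose.1 + ev choose.2 = ev q₁ + ev q₂ by the Freiman property
      apply LinearMap.ext
      intro φ
      have hfr := φ.2 hexx.choose.1 hexx.choose.2 q₁ q₂ hsum
      rw [LinearMap.add_apply, LinearMap.add_apply]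
      exact hfr
  have hcardle : (hatAdd A).card ≤ (hatAdd S).card :=
    le_trans (Finset.card_le_card htrans) Finset.card_image_le
  have hgeom := freiman_geom A r hrank
  rw [hAcard] at hgeom
  refine hgeom.trans ?_
  exact_mod_cast hcardle
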